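/- The double coset $G_\mathbb{R} c_{\beta_1} c_{\beta_2} B$ is contained in the closure (in $G_\mathbb{C}$) of the double coset $G_\mathbb{R} c_\delta B$. (The inclusion $S'_{\rm op} \subset {S'_{10}}^{cl}$ used to deduce (3.5) from (3.3).) -/

import Mathlib

open Matrix

noncomputable section

/-- 4×4 complex matrices. -/
abbrev M4 : Type := Matrix (Fin 4) (Fin 4) ℂ

/-- The standard symplectic form matrix `J = [[0, -I₂],[I₂, 0]]`. -/
def Jmat : M4 := !![0, 0, -1, 0; 0, 0, 0, -1; 1, 0, 0, 0; 0, 1, 0, 0]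

/-- `G_ℂ = Sp(2,ℂ) = {g ∈ GL(4,ℂ) : ᵗg J g = J}`. -/
def GC : Set M4 := {g | IsUnit g ∧ gᵀ * Jmat * g = Jmat}

/-- `K_ℂ = {diag(g, ᵗg⁻¹) : g ∈ GL(2,ℂ)}`. -/
def KC : Set M4 :=
  {m | ∃ g : Matrix (Fin 2) (Fin 2) ℂ, IsUnit g ∧
    m = !![g 0 0, g 0 1, 0, 0;
           g 1 0, g 1 1, 0, 0;
           0, 0, (gᵀ)⁻¹ 0 0, (gᵀ)⁻¹ 0 1;
           0, 0, (gᵀ)⁻¹ 1 0, (gᵀ)⁻¹ 1 1]}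

/-- The Hermitian form of signature (2,2): `(w,z) = w̄₁z₁ + w̄₂z₂ - w̄₃z₃ - w̄₄z₄`. -/
def hermForm (w z : Fin 4 → ℂ) : ℂ :=
  star (w 0) * z 0 + star (w 1) * z 1 - star (w 2) * z 2 - star (w 3) * z 3

/-- `G_ℝ = G_ℂ ∩ U(2,2)`. -/
def GR : Set M4 :=
  {g | g ∈ GC ∧ ∀ w z : Fin 4 → ℂ, hermForm (g.mulVec w) (g.mulVec z) = hermForm w z}

/-- The standard basis vectors of `ℂ⁴`. -/
def stdVec (i : Fin 4) : Fin 4 → ℂ := Pi.single i 1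

/-- `U₊ = ℂe₁ ⊕ ℂe₂`. -/
def Uplus : Submodule ℂ (Fin 4 → ℂ) := Submodule.span ℂ {stdVec 0, stdVec 1}

/-- `U₋ = ℂe₃ ⊕ ℂe₄`. -/
def Uminus : Submodule ℂ (Fin 4 → ℂ) := Submodule.span ℂ {stdVec 2, stdVec 3}

/-- The line `ℂe₁`. -/
def line1 : Submodule ℂ (Fin 4 → ℂ) := Submodule.span ℂ {stdVec 0}

/-- `Q = {g ∈ G_ℂ : g U₊ = U₊}`. -/
def Qpar : Set M4 := {g | g ∈ GC ∧ Uplus.map g.mulVecLin = Uplus}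

/-- `Q̄ = {g ∈ G_ℂ : g U₋ = U₋}`. -/
def Qbar : Set M4 := {g | g ∈ GC ∧ Uminus.map g.mulVecLin = Uminus}

/-- The Borel subgroup `B = {g ∈ G_ℂ : g ℂe₁ = ℂe₁, g U₊ = U₊}`. -/
def Bor : Set M4 :=
  {g | g ∈ GC ∧ line1.map g.mulVecLin = line1 ∧ Uplus.map g.mulVecLin = Uplus}

/-- `t₁(s) = exp s(E₃₁ - E₁₃)`. -/
def t1 (s : ℝ) : M4 :=
  !![(Real.cos s : ℂ), 0, (-(Real.sin s) : ℂ), 0;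
     0, 1, 0, 0;
     ((Real.sin s : ℝ) : ℂ), 0, (Real.cos s : ℂ), 0;
     0, 0, 0, 1]

/-- `t₂(s) = exp s(E₄₂ - E₂₄)`. -/
def t2 (s : ℝ) : M4 :=
  !![1, 0, 0, 0;
     0, (Real.cos s : ℂ), 0, (-(Real.sin s) : ℂ);
     0, 0, 1, 0;
     0, ((Real.sin s : ℝ) : ℂ), 0, (Real.cos s : ℂ)]

def cb1 : M4 := t1 (Real.pi / 4)
def cb2 : M4 := t2 (Real.pi / 4)
def wb1 : M4 := t1 (Real.pi / 2)
def wb2 : M4 := t2 (Real.pi / 2)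

/-- `c_δ = (1/√2) · [[1,0,0,-1],[0,1,-1,0],[0,1,1,0],[1,0,0,1]]`. -/
def cdelta : M4 :=
  ((Real.sqrt 2 : ℂ))⁻¹ • !![1, 0, 0, -1; 0, 1, -1, 0; 0, 1, 1, 0; 1, 0, 0, 1]

/-- The double coset `A g C = {a g c : a ∈ A, c ∈ C}`. -/
def dc (A : Set M4) (g : M4) (C : Set M4) : Set M4 :=
  {m | ∃ a ∈ A, ∃ c ∈ C, m = a * g * c}

namespace Stmt9Aux

open Complex

noncomputable def r : ℂ := ((Real.sqrt 2 : ℝ) : ℂ)⁻¹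

lemma sq2_ne : ((Real.sqrt 2 : ℝ) : ℂ) ≠ 0 := by
  simp [Complex.ofReal_ne_zero]

lemma h2c : ((Real.sqrt 2 : ℝ) : ℂ) * ((Real.sqrt 2 : ℝ) : ℂ) = 2 := by
  rw [← Complex.ofReal_mul, Real.mul_self_sqrt (by norm_num)]
  norm_num

lemma r_mul_r : r * r = 2⁻¹ := by
  rw [r, ← mul_inv, h2c]

lemma r_ne_zero : r ≠ 0 := inv_ne_zero sq2_ne

lemma r_half : r = ((Real.sqrt 2 : ℝ) : ℂ) / 2 := by
  rw [r, eq_div_iff (two_ne_zero), inv_mul_eq_iff_eq_mul₀ sq2_ne, h2c]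

/-- `g₀ = c_{β₁} c_{β₂}` in closed form. -/
noncomputable def g0 : M4 := r • !![1,0,-1,0; 0,1,0,-1; 1,0,1,0; 0,1,0,1]

lemma cb_eq : cb1 * cb2 = g0 := by
  ext i j
  fin_cases i <;> fin_cases j <;>
    simp [cb1, cb2, t1, t2, g0, Matrix.mul_apply, Fin.sum_univ_four, r_half,
      Matrix.vecHead, Matrix.vecTail] <;> ring


lemma r_sq : r ^ 2 = 2⁻¹ := by rw [sq, r_mul_r]

noncomputable def mm (τ : ℝ) : M4 :=
  r • !![1,0,-1,I*(τ:ℂ)/2; I*(τ:ℂ)/2,1,0,-1; 1,0,1,-(I*(τ:ℂ)/2); I*(τ:ℂ)/2,1,0,1]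

noncomputable def mv (τ : ℝ) : M4 :=
  r • !![1,0,1,0; -(I*(τ:ℂ)/2),1,-(I*(τ:ℂ)/2),1; -1,-(I*(τ:ℂ)/2),1,I*(τ:ℂ)/2; 0,-1,0,1]

noncomputable def bm (τ : ℝ) : M4 :=
  !![I*(τ:ℂ)⁻¹, (τ:ℂ)⁻¹*(τ:ℂ)⁻¹, 0,0; 0,(τ:ℂ)⁻¹*(τ:ℂ)⁻¹,0,0;
     0,0,-(I*(τ:ℂ)),0; 0,0,I*(τ:ℂ),(τ:ℂ)*(τ:ℂ)]

noncomputable def bv (τ : ℝ) : M4 :=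
  !![-(I*(τ:ℂ)), I*(τ:ℂ),0,0; 0,(τ:ℂ)*(τ:ℂ),0,0;
     0,0,I*(τ:ℂ)⁻¹,0; 0,0,(τ:ℂ)⁻¹*(τ:ℂ)⁻¹,(τ:ℂ)⁻¹*(τ:ℂ)⁻¹]

noncomputable def cdv : M4 := r • !![1,0,0,1; 0,1,1,0; 0,-1,1,0; -1,0,0,1]

def Hm : M4 := !![1,0,0,0;0,1,0,0;0,0,-1,0;0,0,0,-1]
def Kn : M4 := !![0,0,0,-1;0,0,-1,0;0,-1,0,0;-1,0,0,0]
noncomputable def Qc (τ : ℝ) : M4 := !![0,0,-1,I*(τ:ℂ); 0,0,0,-1; -1,0,0,0; -(I*(τ:ℂ)),-1,0,0]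
noncomputable def aa (τ : ℝ) : M4 := mm τ * bv τ * cdv

section WithTau
variable {τ : ℝ}

lemma mm_mv : mm τ * mv τ = 1 := by
  ext i j
  fin_cases i <;> fin_cases j <;>
    simp [mm, mv, Matrix.mul_apply, Fin.sum_univ_four, Matrix.one_apply,
      Matrix.vecHead, Matrix.vecTail] <;>
    (try ring_nf) <;> (try simp [r_sq, Complex.I_sq]) <;> (try ring)

lemma mv_mm : mv τ * mm τ = 1 := by
  ext i j
  fin_cases i <;> fin_cases j <;>
    simp [mm, mv, Matrix.mul_apply, Fin.sum_univ_four, Matrix.one_apply,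
      Matrix.vecHead, Matrix.vecTail] <;>
    (try ring_nf) <;> (try simp [r_sq, Complex.I_sq]) <;> (try ring)

lemma bm_bv (hτ : (τ:ℂ) ≠ 0) : bm τ * bv τ = 1 := by
  ext i j
  fin_cases i <;> fin_cases j <;>
    simp [bm, bv, Matrix.mul_apply, Fin.sum_univ_four, Matrix.one_apply,
      Matrix.vecHead, Matrix.vecTail] <;>
    (try field_simp) <;> (try ring_nf) <;> (try simp [Complex.I_sq]) <;> (try ring)

lemma bv_bm (hτ : (τ:ℂ) ≠ 0) : bv τ * bm τ = 1 := by
  ext i j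
  fin_cases i <;> fin_cases j <;>
    simp [bm, bv, Matrix.mul_apply, Fin.sum_univ_four, Matrix.one_apply,
      Matrix.vecHead, Matrix.vecTail] <;>
    (try field_simp) <;> (try ring_nf) <;> (try simp [Complex.I_sq]) <;> (try ring)

lemma cd_cdv : cdelta * cdv = 1 := by
  have hr : ((Real.sqrt 2 : ℝ) : ℂ)⁻¹ = r := rfl
  ext i j
  fin_cases i <;> fin_cases j <;>
    simp [cdelta, cdv, hr, Matrix.mul_apply, Fin.sum_univ_four, Matrix.one_apply,
      Matrix.vecHead, Matrix.vecTail] <;>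
    (try ring_nf) <;> (try simp [r_sq, Complex.I_sq]) <;> (try ring)

lemma cdv_cd : cdv * cdelta = 1 := by
  have hr : ((Real.sqrt 2 : ℝ) : ℂ)⁻¹ = r := rfl
  ext i j
  fin_cases i <;> fin_cases j <;>
    simp [cdelta, cdv, hr, Matrix.mul_apply, Fin.sum_univ_four, Matrix.one_apply,
      Matrix.vecHead, Matrix.vecTail] <;>
    (try ring_nf) <;> (try simp [r_sq, Complex.I_sq]) <;> (try ring)

end WithTau
section WithTau2
variable {τ : ℝ}

lemma conj_r : (starRingEnd ℂ) r = r := by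
  simp [r, map_inv₀, Complex.conj_ofReal]

lemma mm_sympl : (mm τ)ᵀ * Jmat * mm τ = Jmat := by
  ext i j
  fin_cases i <;> fin_cases j <;>
    simp [mm, Jmat, Matrix.mul_apply, Fin.sum_univ_four, Matrix.transpose_apply,
      Matrix.vecHead, Matrix.vecTail] <;>
    (try ring_nf) <;> (try simp [r_sq, Complex.I_sq]) <;> (try ring)

lemma bv_sympl (hτ : (τ:ℂ) ≠ 0) : (bv τ)ᵀ * Jmat * bv τ = Jmat := by
  ext i j
  fin_cases i <;> fin_cases j <;>
    simp [bv, Jmat, Matrix.mul_apply, Fin.sum_univ_four, Matrix.transpose_apply,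
      Matrix.vecHead, Matrix.vecTail] <;>
    (try field_simp) <;> (try ring_nf) <;> (try simp [Complex.I_sq]) <;> (try ring)

lemma bm_sympl (hτ : (τ:ℂ) ≠ 0) : (bm τ)ᵀ * Jmat * bm τ = Jmat := by
  ext i j
  fin_cases i <;> fin_cases j <;>
    simp [bm, Jmat, Matrix.mul_apply, Fin.sum_univ_four, Matrix.transpose_apply,
      Matrix.vecHead, Matrix.vecTail] <;>
    (try field_simp) <;> (try ring_nf) <;> (try simp [Complex.I_sq]) <;> (try ring)

lemma cdv_sympl : cdvᵀ * Jmat * cdv = Jmat := by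
  ext i j
  fin_cases i <;> fin_cases j <;>
    simp [cdv, Jmat, Matrix.mul_apply, Fin.sum_univ_four, Matrix.transpose_apply,
      Matrix.vecHead, Matrix.vecTail] <;>
    (try ring_nf) <;> (try simp [r_sq, Complex.I_sq]) <;> (try ring)

lemma mm_herm : (mm τ)ᴴ * Hm * mm τ = Qc τ := by
  ext i j
  fin_cases i <;> fin_cases j <;>
    simp [mm, Hm, Qc, Matrix.mul_apply, Fin.sum_univ_four, Matrix.conjTranspose_apply,
      Matrix.vecHead, Matrix.vecTail, Complex.star_def, _root_.map_mul, map_div₀,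
      Complex.conj_ofReal, Complex.conj_I, conj_r, map_ofNat] <;>
    (try ring_nf) <;> (try simp [r_sq, Complex.I_sq]) <;> (try ring)

lemma bm_herm (hτ : (τ:ℂ) ≠ 0) : (bm τ)ᴴ * Kn * bm τ = Qc τ := by
  have hcj : (starRingEnd ℂ) (τ:ℂ) = (τ:ℂ) := Complex.conj_ofReal τ
  ext i j
  fin_cases i <;> fin_cases j <;>
    simp [bm, Kn, Qc, Matrix.mul_apply, Fin.sum_univ_four, Matrix.conjTranspose_apply,
      Matrix.vecHead, Matrix.vecTail, Complex.star_def, _root_.map_mul, map_inv₀,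
      Complex.conj_ofReal, Complex.conj_I, conj_r, map_ofNat] <;>
    (try field_simp) <;> (try ring_nf) <;> (try simp [Complex.I_sq]) <;> (try ring)

lemma cdv_herm : cdvᴴ * Kn * cdv = Hm := by
  ext i j
  fin_cases i <;> fin_cases j <;>
    simp [cdv, Kn, Hm, Matrix.mul_apply, Fin.sum_univ_four, Matrix.conjTranspose_apply,
      Matrix.vecHead, Matrix.vecTail, Complex.star_def, _root_.map_mul,
      Complex.conj_ofReal, Complex.conj_I, conj_r, map_ofNat] <;>
    (try ring_nf) <;> (try simp [r_sq, Complex.I_sq]) <;> (try ring)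

end WithTau2
lemma GC_mul {a b : M4} (ha : a ∈ GC) (hb : b ∈ GC) : a * b ∈ GC := by
  refine ⟨ha.1.mul hb.1, ?_⟩
  have h : (a * b)ᵀ * Jmat * (a * b) = bᵀ * (aᵀ * Jmat * a) * b := by
    rw [Matrix.transpose_mul]; noncomm_ring
  rw [h, ha.2]
  exact hb.2

lemma hermForm_eq (w z : Fin 4 → ℂ) : hermForm w z = star w ⬝ᵥ Hm.mulVec z := by
  simp [hermForm, Hm, Matrix.mulVec, dotProduct, Fin.sum_univ_four,
    Pi.star_apply, Matrix.vecHead, Matrix.vecTail]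
  ring

lemma herm_of_matrix {a : M4} (h : aᴴ * Hm * a = Hm) :
    ∀ w z : Fin 4 → ℂ, hermForm (a.mulVec w) (a.mulVec z) = hermForm w z := by
  intro w z
  rw [hermForm_eq, hermForm_eq, Matrix.star_mulVec, Matrix.mulVec_mulVec,
    Matrix.dotProduct_mulVec, Matrix.vecMul_vecMul, ← Matrix.mul_assoc,
    ← Matrix.dotProduct_mulVec, Matrix.mul_assoc, ← Matrix.mul_assoc, h]

lemma GR_mul {a b : M4} (ha : a ∈ GR) (hb : b ∈ GR) : a * b ∈ GR := by
  refine ⟨GC_mul ha.1 hb.1, fun w z => ?_⟩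
  rw [← Matrix.mulVec_mulVec, ← Matrix.mulVec_mulVec, ha.2, hb.2]

lemma Bor_mul {a b : M4} (ha : a ∈ Bor) (hb : b ∈ Bor) : a * b ∈ Bor := by
  refine ⟨GC_mul ha.1 hb.1, ?_, ?_⟩ <;>
    rw [Matrix.mulVecLin_mul, Submodule.map_comp]
  · rw [hb.2.1, ha.2.1]
  · rw [hb.2.2, ha.2.2]

section Mem
variable {τ : ℝ} (hτ : (τ:ℂ) ≠ 0)

lemma mm_GC : mm τ ∈ GC := ⟨⟨⟨mm τ, mv τ, mm_mv, mv_mm⟩, rfl⟩, mm_sympl⟩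

include hτ in
lemma bv_GC : bv τ ∈ GC := ⟨⟨⟨bv τ, bm τ, bv_bm hτ, bm_bv hτ⟩, rfl⟩, bv_sympl hτ⟩

include hτ in
lemma bm_GC : bm τ ∈ GC := ⟨⟨⟨bm τ, bv τ, bm_bv hτ, bv_bm hτ⟩, rfl⟩, bm_sympl hτ⟩

lemma cdv_GC : cdv ∈ GC := ⟨⟨⟨cdv, cdelta, cdv_cd, cd_cdv⟩, rfl⟩, cdv_sympl⟩

include hτ in
lemma aa_herm : (aa τ)ᴴ * Hm * aa τ = Hm := by
  have h1 : (bv τ)ᴴ * ((bm τ)ᴴ * Kn * bm τ) * bv τ = (bm τ * bv τ)ᴴ * Kn * (bm τ * bv τ) := by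
    rw [Matrix.conjTranspose_mul]; noncomm_ring
  have h2 : (aa τ)ᴴ * Hm * aa τ = cdvᴴ * ((bv τ)ᴴ * ((mm τ)ᴴ * Hm * mm τ) * bv τ) * cdv := by
    rw [aa, Matrix.conjTranspose_mul, Matrix.conjTranspose_mul]; noncomm_ring
  rw [h2, mm_herm, ← bm_herm hτ, h1, bm_bv hτ]
  simpa using cdv_herm

include hτ in
lemma aa_GR : aa τ ∈ GR :=
  ⟨GC_mul (GC_mul mm_GC (bv_GC hτ)) cdv_GC, herm_of_matrix (aa_herm hτ)⟩

lemma bm_col0 : (bm τ).mulVecLin (stdVec 0) = (I*(τ:ℂ)⁻¹) • stdVec 0 := by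
  funext i
  fin_cases i <;>
    simp [Matrix.mulVecLin_apply, Matrix.mulVec, dotProduct, bm, stdVec,
      Pi.single_apply, Fin.sum_univ_four, Matrix.vecHead, Matrix.vecTail]

lemma bm_col1 : (bm τ).mulVecLin (stdVec 1) = ((τ:ℂ)⁻¹*(τ:ℂ)⁻¹) • (stdVec 0 + stdVec 1) := by
  funext i
  fin_cases i <;>
    simp [Matrix.mulVecLin_apply, Matrix.mulVec, dotProduct, bm, stdVec,
      Pi.single_apply, Fin.sum_univ_four, Matrix.vecHead, Matrix.vecTail]

include hτ in
lemma bm_Bor : bm τ ∈ Bor := by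
  have hIτ : IsUnit (I*(τ:ℂ)⁻¹) :=
    isUnit_iff_ne_zero.mpr (mul_ne_zero Complex.I_ne_zero (inv_ne_zero hτ))
  refine ⟨bm_GC hτ, ?_, ?_⟩
  · rw [line1, Submodule.map_span, Set.image_singleton, bm_col0]
    exact Submodule.span_singleton_smul_eq hIτ _
  · rw [Uplus, Submodule.map_span, Set.image_insert_eq, Set.image_singleton,
      bm_col0, bm_col1]
    apply le_antisymm
    · rw [Submodule.span_le, Set.insert_subset_iff, Set.singleton_subset_iff]
      constructor
      · exact Submodule.smul_mem _ _ (Submodule.subset_span (by simp))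
      · refine Submodule.smul_mem _ _ (Submodule.add_mem _ ?_ ?_) <;>
          exact Submodule.subset_span (by simp)
    · rw [Submodule.span_le, Set.insert_subset_iff, Set.singleton_subset_iff]
      constructor
      · refine Submodule.mem_span_pair.mpr ⟨(I*(τ:ℂ)⁻¹)⁻¹, 0, ?_⟩
        rw [smul_smul, inv_mul_cancel₀ hIτ.ne_zero]
        simp
      · refine Submodule.mem_span_pair.mpr ⟨-(I*(τ:ℂ)⁻¹)⁻¹, (τ:ℂ)*(τ:ℂ), ?_⟩
        rw [smul_smul, smul_smul]
        have e1 : -(I*(τ:ℂ)⁻¹)⁻¹ * (I*(τ:ℂ)⁻¹) = -1 := by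
          rw [neg_mul, inv_mul_cancel₀ hIτ.ne_zero]
        have e2 : (τ:ℂ)*(τ:ℂ) * ((τ:ℂ)⁻¹*(τ:ℂ)⁻¹) = 1 := by
          field_simp
        rw [e1, e2, one_smul, neg_one_smul]
        abel
  
end Mem
lemma mm_zero : mm 0 = cb1 * cb2 := by
  rw [cb_eq]
  ext i j
  fin_cases i <;> fin_cases j <;>
    simp [mm, g0, Matrix.vecHead, Matrix.vecTail]

lemma mm_continuous : Continuous mm := by
  unfold mm
  apply Continuous.fun_const_smul
  apply continuous_matrix
  intro i j
  fin_cases i <;> fin_cases j <;>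
    simp [Matrix.vecHead, Matrix.vecTail] <;> fun_prop

lemma mm_decomp {τ : ℝ} (hτ : (τ:ℂ) ≠ 0) : aa τ * cdelta * bm τ = mm τ := by
  have h : aa τ * cdelta * bm τ = mm τ * (bv τ * ((cdv * cdelta) * bm τ)) := by
    rw [aa]; noncomm_ring
  rw [h, cdv_cd, Matrix.one_mul, bv_bm hτ, Matrix.mul_one]

end Stmt9Aux

/-- `G_ℝ c_{β₁} c_{β₂} B ⊆ cl(G_ℝ c_δ B)`, i.e. `S'_op ⊆ S'₁₀^cl`. -/
theorem stmt_9 : dc GR (cb1 * cb2) Bor ⊆ closure (dc GR cdelta Bor) := by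
  rintro x ⟨h, hh, b', hb', rfl⟩
  have key : ∀ n : ℕ, h * Stmt9Aux.mm (1/(n+1)) * b' ∈ dc GR cdelta Bor := by
    intro n
    have hτ : (((1:ℝ)/(n+1) : ℝ) : ℂ) ≠ 0 := by
      rw [Complex.ofReal_ne_zero]
      positivity
    refine ⟨h * Stmt9Aux.aa (1/(n+1)), Stmt9Aux.GR_mul hh (Stmt9Aux.aa_GR hτ),
      Stmt9Aux.bm (1/(n+1)) * b', Stmt9Aux.Bor_mul (Stmt9Aux.bm_Bor hτ) hb', ?_⟩
    rw [show h * Stmt9Aux.aa (1/(n+1)) * cdelta * (Stmt9Aux.bm (1/(n+1)) * b')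
        = h * (Stmt9Aux.aa (1/(n+1)) * cdelta * Stmt9Aux.bm (1/(n+1))) * b' by noncomm_ring,
      Stmt9Aux.mm_decomp hτ]
  have hg : Continuous fun X : M4 => h * X * b' :=
    (continuous_const.matrix_mul continuous_id).matrix_mul continuous_const
  have ht : Filter.Tendsto (fun n : ℕ => ((1:ℝ)/(n+1))) Filter.atTop (nhds 0) :=
    tendsto_one_div_add_atTop_nhds_zero_nat
  have htend : Filter.Tendsto (fun n : ℕ => h * Stmt9Aux.mm (1/(n+1)) * b') Filter.atTop
      (nhds (h * (cb1 * cb2) * b')) := by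
    have := (hg.tendsto (Stmt9Aux.mm 0)).comp ((Stmt9Aux.mm_continuous.tendsto 0).comp ht)
    rw [Stmt9Aux.mm_zero] at this
    exact this
  exact mem_closure_of_tendsto htend (Filter.Eventually.of_forall key)
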